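/- Let (T^+, Δ^+) satisfy assumption (A): T^+ has a basis 𝓑^+ which is a free commutative monoid on a finite set 𝓑°^+ and the polynomial generators X_1,…,X_d, with Δ^+X_i = X_i⊗𝟏 + 𝟏⊗X_i. Define linear maps D^k on T^+ by the expansion Δ^+τ = Σ_{σ∉𝓑_X^+} σ⊗(τ/^+σ) + Σ_k (X^k/k!) ⊗ D^kτ. Then coassociativity of Δ^+ implies D^k D^ℓ τ = D^{k+ℓ} τ for all multi-indices k, ℓ and all τ ∈ T^+. -/

import Mathlib

open TensorProduct

variable {d : ℕ} {H : Type*} [CommRing H] [Algebra ℝ H] {β : Type*}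

/-- Given a basis `B` of `T⁺` and the coproduct `Δ⁺`, the "right quotient"
`τ/⁺b := (B.coord b ⊗ Id)(Δ⁺τ)`, i.e. the coefficient of the basis element `b` in the left
tensor slot of `Δ⁺τ`. -/
noncomputable def quoOp (B : Module.Basis β ℝ H) (Δ : H →ₐ[ℝ] H ⊗[ℝ] H) (b : β) (τ : H) : H :=
  (TensorProduct.lid ℝ H)
    ((TensorProduct.map (B.coord b) (LinearMap.id : H →ₗ[ℝ] H)) (Δ τ))

/-- The operator `D^k`, defined by the expansion
`Δ⁺τ = Σ_{σ∉𝓑_X^+} σ⊗(τ/⁺σ) + Σ_k (X^k/k!) ⊗ D^kτ`, i.e.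
`D^kτ = k! · (coefficient of X^k in the left slot of Δ⁺τ)`. -/
noncomputable def Dop (B : Module.Basis β ℝ H) (pX : (Fin d →₀ ℕ) → β)
    (Δ : H →ₐ[ℝ] H ⊗[ℝ] H) (k : Fin d →₀ ℕ) (τ : H) : H :=
  (k.prod fun _ n => (n.factorial : ℝ)) • quoOp B Δ (pX k) τ

/-- Auxiliary: extraction of the coefficient of `b` in the left slot, with an arbitrary
module in the right slot. -/
noncomputable def Lq (B : Module.Basis β ℝ H) (b : β) (M : Type*) [AddCommGroup M] [Module ℝ M] :
    H ⊗[ℝ] M →ₗ[ℝ] M :=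
  (TensorProduct.lid ℝ M).toLinearMap ∘ₗ TensorProduct.map (B.coord b) LinearMap.id

lemma Lq_tmul (B : Module.Basis β ℝ H) (b : β) {M : Type*} [AddCommGroup M] [Module ℝ M]
    (x : H) (y : M) : Lq B b M (x ⊗ₜ[ℝ] y) = B.coord b x • y := by
  simp [Lq]

lemma quoOp_eq (B : Module.Basis β ℝ H) (Δ : H →ₐ[ℝ] H ⊗[ℝ] H) (b : β) (τ : H) :
    quoOp B Δ b τ = Lq B b H (Δ τ) := rfl

lemma key1 (B : Module.Basis β ℝ H) (b : β) (Δ : H →ₐ[ℝ] H ⊗[ℝ] H) :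
    Δ.toLinearMap ∘ₗ Lq B b H =
      Lq B b (H ⊗[ℝ] H) ∘ₗ TensorProduct.map LinearMap.id Δ.toLinearMap := by
  apply TensorProduct.ext'
  intro x y
  simp [Lq_tmul, map_smul]

lemma key2 (B : Module.Basis β ℝ H) (b b' : β) :
    Lq B b' H ∘ₗ Lq B b (H ⊗[ℝ] H) ∘ₗ (TensorProduct.assoc ℝ H H H).toLinearMap =
      (TensorProduct.lid ℝ H).toLinearMap ∘ₗ
        TensorProduct.map ((B.tensorProduct B).coord (b, b')) LinearMap.id := by
  apply TensorProduct.ext_threefold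
  intro x y z
  simp [Lq_tmul, Module.Basis.coord_apply, Module.Basis.tensorProduct_repr_tmul_apply, smul_smul, mul_comm]

set_option maxHeartbeats 1000000 in
set_option synthInstance.maxHeartbeats 200000 in
lemma key3 (B : Module.Basis β ℝ H) (pX : (Fin d →₀ ℕ) → β)
    (hinj : Function.Injective pX) (Δ : H →ₐ[ℝ] H ⊗[ℝ] H)
    (hX : ∀ m : Fin d →₀ ℕ, Δ (B (pX m)) =
      ∑ j ∈ Finset.Iic m, ((∏ i, (m i).choose (j i) : ℕ) : ℝ) •
        (B (pX j) ⊗ₜ[ℝ] B (pX (m - j))))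
    (hNoXX : ∀ b : β, b ∉ Set.range pX → ∀ k ℓ : Fin d →₀ ℕ,
      (B.tensorProduct B).repr (Δ (B b)) (pX k, pX ℓ) = 0)
    (k ℓ : Fin d →₀ ℕ) :
    (TensorProduct.lid ℝ H).toLinearMap ∘ₗ
        TensorProduct.map ((B.tensorProduct B).coord (pX ℓ, pX k)) LinearMap.id ∘ₗ
        TensorProduct.map Δ.toLinearMap LinearMap.id =
      ((∏ i, ((k + ℓ) i).choose (k i) : ℕ) : ℝ) • Lq B (pX (k + ℓ)) H := by
  classical
  apply (B.tensorProduct B).ext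
  rintro ⟨b, b'⟩
  rw [Module.Basis.tensorProduct_apply]
  have lhs_eq : ((TensorProduct.lid ℝ H).toLinearMap ∘ₗ
        TensorProduct.map ((B.tensorProduct B).coord (pX ℓ, pX k)) LinearMap.id ∘ₗ
        TensorProduct.map Δ.toLinearMap LinearMap.id) (B b ⊗ₜ[ℝ] B b') =
      ((B.tensorProduct B).repr (Δ (B b)) (pX ℓ, pX k)) • B b' := by
    simp [Module.Basis.coord_apply]
  rw [lhs_eq]
  have rhs_eq : (((∏ i, ((k + ℓ) i).choose (k i) : ℕ) : ℝ) • Lq B (pX (k + ℓ)) H)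
        (B b ⊗ₜ[ℝ] B b') =
      (((∏ i, ((k + ℓ) i).choose (k i) : ℕ) : ℝ) * B.coord (pX (k + ℓ)) (B b)) • B b' := by
    simp [Lq_tmul, smul_smul]
  rw [rhs_eq]
  by_cases hb : b ∈ Set.range pX
  · obtain ⟨m, rfl⟩ := hb
    have hcoord : B.coord (pX (k + ℓ)) (B (pX m)) = if m = k + ℓ then (1:ℝ) else 0 := by
      rw [Module.Basis.coord_apply, Module.Basis.repr_self, Finsupp.single_apply]
      simp [hinj.eq_iff]
    have hscal : (B.tensorProduct B).repr (Δ (B (pX m))) (pX ℓ, pX k) =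
        if m = k + ℓ then ((∏ i, ((k + ℓ) i).choose (k i) : ℕ) : ℝ) else 0 := by
      rw [hX m, map_sum, Finset.sum_apply']
      simp only [map_smul, Module.Basis.tensorProduct_repr_tmul_apply, Module.Basis.repr_self,
        Finsupp.smul_apply, smul_eq_mul]
      by_cases hm : m = k + ℓ
      · subst hm
        rw [if_pos rfl, Finset.sum_eq_single ℓ]
        · have h1 : k + ℓ - ℓ = k := by simp
          have h2' : (∏ i, (((k i + ℓ i)).choose (ℓ i) : ℝ)) =
              ∏ i, (((k i + ℓ i)).choose (k i) : ℝ) := by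
            refine Finset.prod_congr rfl fun i _ => ?_
            rw [Nat.choose_symm_add]
          simp [h1, Finsupp.single_apply, h2']
        · intro j hj hjℓ
          simp [Finsupp.single_apply, hinj.eq_iff, hjℓ]
        · intro h
          exact absurd (Finset.mem_Iic.mpr le_add_self) h
      · rw [if_neg hm]
        refine Finset.sum_eq_zero fun j hj => ?_
        rcases eq_or_ne j ℓ with rfl | hjl
        · rcases eq_or_ne (m - j) k with hk | hk
          · exact absurd (by rw [← tsub_add_cancel_of_le (Finset.mem_Iic.mp hj), hk]) hm
          · simp [Finsupp.single_apply, hinj.eq_iff, hk]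
        · simp [Finsupp.single_apply, hinj.eq_iff, hjl]
    rw [hscal, hcoord]
    by_cases hm : m = k + ℓ <;> simp [hm]
  · rw [hNoXX b hb ℓ k]
    have hz : B.coord (pX (k + ℓ)) (B b) = 0 := by
      rw [Module.Basis.coord_apply, Module.Basis.repr_self, Finsupp.single_apply, if_neg]
      exact fun h => hb ⟨k + ℓ, h.symm⟩
    rw [hz, mul_zero]

/-- under assumption (A), coassociativity of `Δ⁺` implies
`D^k D^ℓ τ = D^{k+ℓ} τ` for all multi-indices `k, ℓ` and all `τ ∈ T⁺`. -/
theorem Dop_comp (B : Module.Basis β ℝ H) (pX : (Fin d →₀ ℕ) → β)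
    (hinj : Function.Injective pX) (Δ : H →ₐ[ℝ] H ⊗[ℝ] H)
    (hcoassoc : (TensorProduct.map Δ.toLinearMap (LinearMap.id : H →ₗ[ℝ] H)).comp
        Δ.toLinearMap =
      (TensorProduct.assoc ℝ H H H).symm.toLinearMap.comp
        ((TensorProduct.map (LinearMap.id : H →ₗ[ℝ] H) Δ.toLinearMap).comp Δ.toLinearMap))
    (hX : ∀ m : Fin d →₀ ℕ, Δ (B (pX m)) =
      ∑ j ∈ Finset.Iic m, ((∏ i, (m i).choose (j i) : ℕ) : ℝ) •
        (B (pX j) ⊗ₜ[ℝ] B (pX (m - j))))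
    (hNoXX : ∀ b : β, b ∉ Set.range pX → ∀ k ℓ : Fin d →₀ ℕ,
      (B.tensorProduct B).repr (Δ (B b)) (pX k, pX ℓ) = 0) :
    ∀ (k ℓ : Fin d →₀ ℕ) (τ : H),
      Dop B pX Δ k (Dop B pX Δ ℓ τ) = Dop B pX Δ (k + ℓ) τ := by
  intro k ℓ τ
  have hsm : ∀ (b : β) (r : ℝ) (x : H), quoOp B Δ b (r • x) = r • quoOp B Δ b x := by
    intro b r x
    simp [quoOp, map_smul]
  have hmain : quoOp B Δ (pX k) (quoOp B Δ (pX ℓ) τ) =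
      ((∏ i, ((k + ℓ) i).choose (k i) : ℕ) : ℝ) • quoOp B Δ (pX (k + ℓ)) τ := by
    rw [quoOp_eq, quoOp_eq, quoOp_eq]
    have e1 : Δ (Lq B (pX ℓ) H (Δ τ)) =
        Lq B (pX ℓ) (H ⊗[ℝ] H) (TensorProduct.map LinearMap.id Δ.toLinearMap (Δ τ)) :=
      LinearMap.congr_fun (key1 B (pX ℓ) Δ) (Δ τ)
    rw [e1]
    have e2 : TensorProduct.map LinearMap.id Δ.toLinearMap (Δ τ) =
        (TensorProduct.assoc ℝ H H H)
          (TensorProduct.map Δ.toLinearMap LinearMap.id (Δ τ)) := by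
      have h := LinearMap.congr_fun hcoassoc τ
      have h' := congrArg (TensorProduct.assoc ℝ H H H) h
      simpa using h'.symm
    rw [e2]
    have e3 := LinearMap.congr_fun (key2 B (pX ℓ) (pX k))
      (TensorProduct.map Δ.toLinearMap LinearMap.id (Δ τ))
    have e4 := LinearMap.congr_fun (key3 B pX hinj Δ hX hNoXX k ℓ) (Δ τ)
    simp only [LinearMap.coe_comp, Function.comp_apply, LinearEquiv.coe_coe,
      LinearMap.smul_apply] at e3 e4
    rw [e3, e4]
  rw [Dop, Dop, Dop, hsm, hmain, smul_smul, smul_smul]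
  congr 1
  rw [Finsupp.prod_fintype _ _ (fun i => by simp),
    Finsupp.prod_fintype _ _ (fun i => by simp),
    Finsupp.prod_fintype _ _ (fun i => by simp)]
  push_cast
  rw [← Finset.prod_mul_distrib, ← Finset.prod_mul_distrib]
  refine Finset.prod_congr rfl fun i _ => ?_
  rw [Pi.add_apply]
  have h := Nat.add_choose_mul_factorial_mul_factorial (k i) (ℓ i)
  have h2 : (k i + ℓ i).choose (k i) = (k i + ℓ i).choose (ℓ i) := Nat.choose_symm_add
  have : (k i).factorial * (ℓ i).factorial * (k i + ℓ i).choose (k i) =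
      (k i + ℓ i).factorial := by
    rw [h2, ← h]; ring
  exact_mod_cast this
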